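/- Let q > d, r ≥ 2, and let a_1,...,a_s ∈ F_q^{r-1} be distinct points such that for each 1 ≤ j ≤ κ_s the multivariate Vandermonde matrix M_j := (a_i^{ω})_{1≤i≤s, |ω|≤j} has maximal rank min{D_j, s}, where D_j := C(j+r-1, r-1) and κ_s is the unique integer with D_{κ_s - 1} < s ≤ D_{κ_s}. Let Φ : F_{r,d} → (F_q[T]_{≤d})^s be the linear map Φ(F) := (F(a_1,T),...,F(a_s,T)). If s ≤ min{D_d, q^{r-1}}, then dim Im(Φ) = C(κ_s - 1 + r, r) + s(d - κ_s + 1). -/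

import Mathlib

open MvPolynomial Finset

lemma finsupp_sum_id_eq' {m : ℕ} (α : Fin m →₀ ℕ) :
    (α.sum fun _ e => e) = ∑ t, α t :=
  Finsupp.sum_fintype _ _ (fun _ => rfl)

lemma finsupp_sum_id_eq'' {m : ℕ} (α : Fin m →₀ ℕ) :
    (α.sum fun _ => (id : ℕ → ℕ)) = ∑ t, α t :=
  Finsupp.sum_fintype _ _ (fun _ => rfl)

noncomputable instance expFintype (m j : ℕ) : Fintype {ω : Fin m → ℕ // ∑ t, ω t ≤ j} :=
  Fintype.ofInjective
    (fun ω => (fun t => (⟨ω.1 t, Nat.lt_succ_of_le ((Finset.single_le_sum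
      (fun i _ => Nat.zero_le _) (Finset.mem_univ t)).trans ω.2)⟩ : Fin (j+1)))
      : _ → (Fin m → Fin (j+1)))
    (by intro x y h; apply Subtype.ext; funext t
        exact congrArg Fin.val (congrFun h t))

section Pieces
variable {K : Type} [Field K] {m s : ℕ}

noncomputable def colSp (a : Fin s → Fin m → K) (j : ℕ) : Submodule K (Fin s → K) :=
  Submodule.span K (Set.range fun ω : {ω : Fin m → ℕ // ∑ t, ω t ≤ j} =>
    fun i => ∏ t, a i t ^ ω.1 t)

noncomputable def evalMap (a : Fin s → Fin m → K) (j : ℕ) :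
    ↥(restrictTotalDegree (Fin m) K j) →ₗ[K] (Fin s → K) :=
  LinearMap.pi fun i => (MvPolynomial.aeval (a i)).toLinearMap ∘ₗ
    (restrictTotalDegree (Fin m) K j).subtype

lemma evalMap_apply (a : Fin s → Fin m → K) (j : ℕ) (p : ↥(restrictTotalDegree (Fin m) K j))
    (i : Fin s) : evalMap a j p i = MvPolynomial.aeval (a i) (p : MvPolynomial (Fin m) K) := rfl

lemma aeval_monomial_prod (a : Fin s → Fin m → K) (i : Fin s) (α : Fin m →₀ ℕ) (c : K) :
    MvPolynomial.aeval (a i) (monomial α c) = c * ∏ t, a i t ^ α t := by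
  rw [aeval_monomial, Finsupp.prod_pow]
  simp

lemma range_evalMap (a : Fin s → Fin m → K) (j : ℕ) :
    LinearMap.range (evalMap a j) = colSp a j := by
  apply le_antisymm
  · rintro - ⟨⟨p, hp⟩, rfl⟩
    have hmem : ∀ α ∈ p.support, (∑ t, α t) ≤ j := by
      intro α hα
      calc (∑ t, α t) = α.sum fun _ e => e := (finsupp_sum_id_eq' α).symm
      _ ≤ p.totalDegree := le_totalDegree hα
      _ ≤ j := (mem_restrictTotalDegree _ j p).1 hp
    have heq : evalMap a j ⟨p, hp⟩
        = ∑ α ∈ p.support, p.coeff α • (fun i => ∏ t, a i t ^ α t) := by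
      funext i
      rw [evalMap_apply]
      calc MvPolynomial.aeval (a i) p
          = MvPolynomial.aeval (a i) (∑ α ∈ p.support, monomial α (p.coeff α)) := by
            rw [support_sum_monomial_coeff]
        _ = ∑ α ∈ p.support, p.coeff α * ∏ t, a i t ^ α t := by
            rw [map_sum]
            exact Finset.sum_congr rfl (fun α _ => aeval_monomial_prod a i α (p.coeff α))
        _ = (∑ α ∈ p.support, p.coeff α • (fun i => ∏ t, a i t ^ α t)) i := by
            simp [Finset.sum_apply]
    rw [heq]
    refine Submodule.sum_mem _ (fun α hα => Submodule.smul_mem _ _ (Submodule.subset_span ?_))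
    exact ⟨⟨fun t => α t, hmem α hα⟩, rfl⟩
  · rw [colSp, Submodule.span_le]
    rintro - ⟨ω, rfl⟩
    have hdeg : (monomial (Finsupp.equivFunOnFinite.symm ω.1) (1 : K)).totalDegree ≤ j := by
      rw [totalDegree_monomial _ (one_ne_zero)]
      rw [finsupp_sum_id_eq']
      exact ω.2
    refine ⟨⟨monomial (Finsupp.equivFunOnFinite.symm ω.1) (1 : K),
      (mem_restrictTotalDegree _ j _).2 hdeg⟩, ?_⟩
    funext i
    rw [evalMap_apply, aeval_monomial_prod, one_mul]
    rfl

lemma aeval_snoc (a : Fin s → Fin m → K) (i : Fin s) (p : MvPolynomial (Fin m) K) (k : ℕ) :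
    MvPolynomial.aeval (Fin.snoc (fun t => Polynomial.C (a i t)) Polynomial.X)
        (rename Fin.castSucc p * X (Fin.last m) ^ k)
      = Polynomial.C (MvPolynomial.aeval (a i) p) * Polynomial.X ^ k := by
  rw [map_mul, map_pow, aeval_X, Fin.snoc_last, aeval_rename]
  congr 1
  have h1 : (Fin.snoc (fun t => Polynomial.C (a i t)) Polynomial.X ∘ Fin.castSucc)
      = fun t => Polynomial.C (a i t) := funext fun t => Fin.snoc_castSucc _ _ _
  rw [h1]
  have h2 : (Polynomial.CAlgHom.comp (MvPolynomial.aeval (a i))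
        : MvPolynomial (Fin m) K →ₐ[K] Polynomial K)
      = MvPolynomial.aeval (fun t => Polynomial.C (a i t)) := by
    apply MvPolynomial.algHom_ext
    intro t
    simp [Polynomial.CAlgHom]
  rw [← h2]
  rfl

lemma monomial_snoc {m : ℕ} (α : Fin (m+1) →₀ ℕ) (c : K) :
    rename Fin.castSucc (monomial (Finsupp.equivFunOnFinite.symm
        (fun t => α (Fin.castSucc t))) c) * X (Fin.last m) ^ (α (Fin.last m)) =
      monomial α c := by
  rw [rename_monomial, X_pow_eq_monomial, monomial_mul, mul_one]
  have h : Finsupp.mapDomain Fin.castSucc (Finsupp.equivFunOnFinite.symm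
      (fun t => α (Fin.castSucc t))) + Finsupp.single (Fin.last m) (α (Fin.last m)) = α := by
    ext j
    refine Fin.lastCases ?_ ?_ j
    · rw [Finsupp.add_apply, Finsupp.mapDomain_notin_range, Finsupp.single_eq_same, zero_add]
      simp only [Set.mem_range, not_exists]
      exact fun t => (Fin.castSucc_lt_last t).ne
    · intro t
      rw [Finsupp.add_apply, Finsupp.mapDomain_apply (Fin.castSucc_injective m),
        Finsupp.single_eq_of_ne' (Fin.castSucc_lt_last t).ne', add_zero]
      rfl
  rw [h]

lemma decomp {m d : ℕ} (F : MvPolynomial (Fin (m+1)) K)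
    (hF : F.totalDegree ≤ d) :
    ∃ c : Fin (d+1) → MvPolynomial (Fin m) K,
      (∀ k, (c k).totalDegree ≤ d - (k : ℕ)) ∧
      F = ∑ k : Fin (d+1), rename Fin.castSucc (c k) * X (Fin.last m) ^ (k : ℕ) := by
  classical
  have hdeg : ∀ α ∈ F.support, (∑ t, α t) ≤ d := by
    intro α hα
    calc (∑ t, α t) = α.sum fun _ e => e := (finsupp_sum_id_eq' α).symm
    _ ≤ F.totalDegree := le_totalDegree hα
    _ ≤ d := hF
  have regroup : ∀ (f : (Fin (m+1) →₀ ℕ) → MvPolynomial (Fin (m+1)) K),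
      (∑ k : Fin (d+1), ∑ α ∈ F.support.filter (fun α => α (Fin.last m) = (k : ℕ)), f α)
        = ∑ α ∈ F.support, f α := by
    intro f
    rw [Finset.sum_congr rfl (fun k _ => Finset.sum_filter _ _), Finset.sum_comm]
    refine Finset.sum_congr rfl (fun α hα => ?_)
    have hk : α (Fin.last m) < d + 1 :=
      Nat.lt_succ_of_le ((Finset.single_le_sum (fun i _ => Nat.zero_le _)
        (Finset.mem_univ (Fin.last m))).trans (hdeg α hα))
    rw [Finset.sum_eq_single_of_mem (⟨α (Fin.last m), hk⟩ : Fin (d+1)) (Finset.mem_univ _)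
      (fun b _ hb => if_neg (fun h => hb (Fin.ext h.symm)))]
    rw [if_pos rfl]
  refine ⟨fun k => ∑ α ∈ F.support.filter (fun α => α (Fin.last m) = (k : ℕ)),
    monomial (Finsupp.equivFunOnFinite.symm (fun t => α (Fin.castSucc t))) (F.coeff α), ?_, ?_⟩
  · intro k
    refine (totalDegree_finset_sum _ _).trans (Finset.sup_le ?_)
    intro α hα
    rw [Finset.mem_filter] at hα
    refine (totalDegree_monomial_le _ _).trans ?_
    rw [finsupp_sum_id_eq'']
    have h1 : (∑ t : Fin m, (Finsupp.equivFunOnFinite.symm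
        (fun t => α (Fin.castSucc t)) : Fin m →₀ ℕ) t) = ∑ t : Fin m, α (Fin.castSucc t) := rfl
    rw [h1]
    have h2 : (∑ t : Fin m, α (Fin.castSucc t)) + (k : ℕ) ≤ d := by
      rw [← hα.2, ← Fin.sum_univ_castSucc (fun j => α j)]
      exact hdeg α hα.1
    omega
  · have step : ∀ k : Fin (d+1), ∀ α ∈ F.support.filter (fun α => α (Fin.last m) = (k : ℕ)),
        rename Fin.castSucc (monomial (Finsupp.equivFunOnFinite.symm
          (fun t => α (Fin.castSucc t))) (F.coeff α)) * X (Fin.last m) ^ (k : ℕ)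
        = monomial α (F.coeff α) := by
      intro k α hα
      rw [Finset.mem_filter] at hα
      rw [← hα.2]
      exact monomial_snoc α (F.coeff α)
    conv_lhs => rw [← support_sum_monomial_coeff F]
    rw [← regroup (fun α => monomial α (F.coeff α))]
    refine Finset.sum_congr rfl (fun k _ => ?_)
    dsimp only
    rw [map_sum, Finset.sum_mul]
    exact (Finset.sum_congr rfl (step k)).symm

end Pieces

lemma hockey (m : ℕ) : ∀ n : ℕ, (∑ j ∈ Finset.range n, (j + m).choose m) = (n + m).choose (m+1)
  | 0 => by simp [Nat.choose_eq_zero_of_lt (Nat.lt_succ_self m)]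
  | (n+1) => by
      rw [Finset.sum_range_succ, hockey m n,
        show n + 1 + m = (n + m) + 1 from by omega, Nat.choose_succ_succ']
      exact Nat.add_comm _ _

/-- Dimension of the image of the evaluation map `Φ(F) = (F(a_1,T),…,F(a_s,T))` on the space
of polynomials in `r = m+1` variables of total degree at most `d`, for distinct points
`a_1,…,a_s ∈ F_q^m` whose multivariate Vandermonde matrices `M_j` (with columns indexed by
exponents `ω` with `|ω| ≤ j`) have maximal rank `min{D_j, s}` for `1 ≤ j ≤ κ_s`, where
`D_j = C(j+m, m)` and `κ_s` is the unique integer with `D_{κ_s-1} < s ≤ D_{κ_s}`: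
if `s ≤ min{D_d, q^m}`, then `dim Im Φ = C(κ_s - 1 + r, r) + s(d - κ_s + 1)`. -/
theorem dim_image_evaluation_map (K : Type) [Field K] [Fintype K] (m d s κ : ℕ)
    (hm : 1 ≤ m) (hd : 2 ≤ d) (hq : d < Fintype.card K) (hs : 1 ≤ s)
    (a : Fin s → Fin m → K) (ha : Function.Injective a)
    (hκ₁ : s ≤ (κ + m).choose m) (hκ₂ : ∀ j < κ, (j + m).choose m < s)
    (hrank : ∀ j, 1 ≤ j → j ≤ κ →
      Module.finrank K ↥(Submodule.span K (Set.range (fun i : Fin s =>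
          (fun ω : {ω : Fin m → ℕ // ∑ t, ω t ≤ j} => ∏ t, a i t ^ ω.1 t))))
        = min ((j + m).choose m) s)
    (hsD : s ≤ (d + m).choose m) (hsq : s ≤ Fintype.card K ^ m)
    (Φ : ↥(MvPolynomial.restrictTotalDegree (Fin (m + 1)) K d) →ₗ[K] (Fin s → Polynomial K))
    (hΦ : ∀ F i, Φ F i = MvPolynomial.aeval
        (Fin.snoc (fun t => Polynomial.C (a i t)) Polynomial.X)
        (F : MvPolynomial (Fin (m + 1)) K)) :
    Module.finrank K ↥(LinearMap.range Φ) = (κ + m).choose (m + 1) + s * (d - κ + 1) := by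
  classical
  have hκd : κ ≤ d := by
    by_contra h
    exact absurd (hκ₂ d (by omega)) (not_lt.2 hsD)
  -- finrank of colSp via matrix transpose
  have hmat : ∀ j : ℕ, Module.finrank K ↥(colSp a j)
      = Module.finrank K ↥(Submodule.span K (Set.range (fun i : Fin s =>
          (fun ω : {ω : Fin m → ℕ // ∑ t, ω t ≤ j} => ∏ t, a i t ^ ω.1 t)))) := by
    intro j
    let M : Matrix (Fin s) {ω : Fin m → ℕ // ∑ t, ω t ≤ j} K :=
      Matrix.of fun i ω => ∏ t, a i t ^ ω.1 t
    have h1 : Module.finrank K ↥(colSp a j) = M.rank := by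
      rw [Matrix.rank_eq_finrank_span_cols]
      rfl
    have h2 := Matrix.rank_eq_finrank_span_row M
    rw [h1, h2]
    rfl
  have hones : Module.finrank K ↥(colSp a 0) = 1 := by
    have hr : (Set.range fun ω : {ω : Fin m → ℕ // ∑ t, ω t ≤ 0} =>
        (fun i : Fin s => ∏ t, a i t ^ ω.1 t)) = {fun _ => 1} := by
      apply Set.eq_singleton_iff_unique_mem.2
      constructor
      · refine ⟨⟨fun _ => 0, by simp⟩, ?_⟩
        funext i; simp
      · rintro - ⟨ω, rfl⟩
        have h0 : ∀ t, ω.1 t = 0 := by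
          intro t
          have := (Finset.single_le_sum (fun i _ => Nat.zero_le (ω.1 i))
            (Finset.mem_univ t)).trans ω.2
          omega
        funext i
        simp [h0]
    rw [colSp, hr]
    exact finrank_span_singleton (by
      intro h
      have := congrFun h ⟨0, hs⟩
      simp at this)
  have hmono : ∀ j j' : ℕ, j ≤ j' → colSp a j ≤ colSp a j' := by
    intro j j' h
    rw [colSp, Submodule.span_le]
    rintro - ⟨ω, rfl⟩
    exact Submodule.subset_span ⟨⟨ω.1, ω.2.trans h⟩, rfl⟩
  have hκs : Module.finrank K ↥(colSp a κ) = s := by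
    rcases Nat.eq_zero_or_pos κ with h0 | hpos
    · subst h0
      have : s = 1 := le_antisymm (by simpa using hκ₁) hs
      rw [hones, this]
    · rw [hmat κ, hrank κ hpos le_rfl, min_eq_right hκ₁]
  have hkey : ∀ j : ℕ, j ≤ d → Module.finrank K ↥(colSp a j) = min ((j + m).choose m) s := by
    intro j hj
    rcases lt_or_ge j κ with hlt | hge
    · rw [min_eq_left (le_of_lt (hκ₂ j hlt))]
      rcases Nat.eq_zero_or_pos j with h0 | hpos
      · subst h0
        rw [hones, Nat.zero_add, Nat.choose_self]
      · rw [hmat j, hrank j hpos (le_of_lt hlt), min_eq_left (le_of_lt (hκ₂ j hlt))]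
    · have hs' : s ≤ (j + m).choose m := hκ₁.trans (Nat.choose_le_choose m (by omega))
      rw [min_eq_right hs']
      refine le_antisymm ?_ ?_
      · refine (Submodule.finrank_le _).trans ?_
        rw [Module.finrank_pi K, Fintype.card_fin]
      · have hmono' := Submodule.finrank_mono (hmono κ j hge)
        omega
  -- the comparison map Ψ'
  let Ψ : (∀ k : Fin (d+1), ↥(colSp a (d - (k : ℕ)))) →ₗ[K] (Fin s → Polynomial K) :=
    { toFun := fun v => fun i => ∑ k : Fin (d+1),
        Polynomial.C ((v k : Fin s → K) i) * Polynomial.X ^ (k : ℕ)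
      map_add' := by
        intro v w
        funext i
        simp [add_mul, Finset.sum_add_distrib]
      map_smul' := by
        intro r v
        funext i
        simp [Polynomial.smul_eq_C_mul, Finset.mul_sum, mul_assoc] }
  have hΨ_apply : ∀ v i, Ψ v i = ∑ k : Fin (d+1),
      Polynomial.C ((v k : Fin s → K) i) * Polynomial.X ^ (k : ℕ) := fun _ _ => rfl
  have hinj : Function.Injective Ψ := by
    rw [injective_iff_map_eq_zero]
    intro v hv
    funext k
    apply Subtype.ext
    funext i
    have h0 := congrFun hv i
    rw [hΨ_apply] at h0
    have h1 := congrArg (fun q => Polynomial.coeff q (k : ℕ)) h0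
    simp only [Polynomial.finset_sum_coeff, Polynomial.coeff_C_mul, Polynomial.coeff_X_pow,
      Polynomial.coeff_zero] at h1
    rw [Finset.sum_eq_single_of_mem k (Finset.mem_univ k) (fun b _ hb => by
      rw [if_neg (fun h => hb (Fin.val_injective h.symm)), mul_zero])] at h1
    rw [if_pos rfl, mul_one] at h1
    exact h1
  have hcompute : ∀ (c : Fin (d+1) → MvPolynomial (Fin m) K) (i : Fin s),
      MvPolynomial.aeval (Fin.snoc (fun t => Polynomial.C (a i t)) Polynomial.X)
        (∑ k : Fin (d+1), MvPolynomial.rename Fin.castSucc (c k)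
          * MvPolynomial.X (Fin.last m) ^ (k : ℕ))
      = ∑ k : Fin (d+1), Polynomial.C (MvPolynomial.aeval (a i) (c k))
          * Polynomial.X ^ (k : ℕ) := by
    intro c i
    rw [map_sum]
    exact Finset.sum_congr rfl (fun k _ => aeval_snoc a i (c k) (k : ℕ))
  have hrange : LinearMap.range Ψ = LinearMap.range Φ := by
    apply le_antisymm
    · rintro - ⟨v, rfl⟩
      have hvk : ∀ k : Fin (d+1), ∃ p : ↥(restrictTotalDegree (Fin m) K (d - (k : ℕ))),
          evalMap a (d - (k : ℕ)) p = (v k : Fin s → K) := by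
        intro k
        have hmemr : ((v k : Fin s → K)) ∈ LinearMap.range (evalMap a (d - (k : ℕ))) := by
          rw [range_evalMap]
          exact (v k).2
        exact hmemr
      choose p hp using hvk
      set F : MvPolynomial (Fin (m+1)) K := ∑ k : Fin (d+1),
        MvPolynomial.rename Fin.castSucc ((p k : MvPolynomial (Fin m) K))
          * MvPolynomial.X (Fin.last m) ^ (k : ℕ) with hFdef
      have hF : F ∈ MvPolynomial.restrictTotalDegree (Fin (m+1)) K d := by
        rw [mem_restrictTotalDegree _ d]
        refine (totalDegree_finset_sum _ _).trans (Finset.sup_le ?_)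
        intro k _
        refine (totalDegree_mul _ _).trans ?_
        have h1 : (MvPolynomial.rename (Fin.castSucc)
            ((p k : MvPolynomial (Fin m) K))).totalDegree ≤ d - (k : ℕ) :=
          (totalDegree_rename_le _ _).trans ((mem_restrictTotalDegree _ _ _).1 (p k).2)
        have h2 : (MvPolynomial.X (Fin.last m) ^ (k : ℕ)
            : MvPolynomial (Fin (m+1)) K).totalDegree = (k : ℕ) := totalDegree_X_pow _ _
        have h3 : (k : ℕ) ≤ d := by omega
        omega
      refine ⟨⟨F, hF⟩, ?_⟩
      funext i
      rw [hΦ]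
      show MvPolynomial.aeval _ F = _
      rw [hFdef, hcompute (fun k => (p k : MvPolynomial (Fin m) K)) i, hΨ_apply]
      refine Finset.sum_congr rfl (fun k _ => ?_)
      rw [← hp k, evalMap_apply]
    · rintro - ⟨F, rfl⟩
      obtain ⟨c, hcdeg, hceq⟩ := decomp (F : MvPolynomial (Fin (m+1)) K)
        ((mem_restrictTotalDegree _ d _).1 F.2)
      refine ⟨fun k => ⟨evalMap a (d - (k : ℕ)) ⟨c k, (mem_restrictTotalDegree _ _ _).2
        (hcdeg k)⟩, by rw [← range_evalMap a (d - (k : ℕ))]; exact ⟨_, rfl⟩⟩, ?_⟩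
      funext i
      rw [hΨ_apply, hΦ]
      show _ = MvPolynomial.aeval _ (F : MvPolynomial (Fin (m+1)) K)
      rw [hceq, hcompute c i]
      rfl
  -- count
  rw [← hrange, LinearMap.finrank_range_of_inj hinj, Module.finrank_pi_fintype K]
  have hterm : ∀ k : Fin (d+1), Module.finrank K ↥(colSp a (d - (k : ℕ)))
      = min ((d - (k : ℕ) + m).choose m) s := fun k => hkey _ (by omega)
  rw [Finset.sum_congr rfl (fun k _ => hterm k)]
  rw [Fin.sum_univ_eq_sum_range (fun k => min ((d - k + m).choose m) s) (d+1)]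
  have hreflect := Finset.sum_range_reflect (fun j => min ((j + m).choose m) s) (d+1)
  simp only [Nat.add_sub_cancel] at hreflect
  rw [hreflect]
  have hsplit : (∑ j ∈ Finset.range (d+1), min ((j + m).choose m) s)
      = (∑ j ∈ Finset.range κ, min ((j + m).choose m) s)
        + ∑ j ∈ Finset.Ico κ (d+1), min ((j + m).choose m) s := by
    rw [Finset.range_eq_Ico, Finset.range_eq_Ico]
    exact (Finset.sum_Ico_consecutive (fun j => min ((j + m).choose m) s) (Nat.zero_le κ) (by omega : κ ≤ d + 1)).symm
  rw [hsplit]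
  have h1 : (∑ j ∈ Finset.range κ, min ((j + m).choose m) s)
      = ∑ j ∈ Finset.range κ, (j + m).choose m := by
    refine Finset.sum_congr rfl (fun j hj => ?_)
    rw [Finset.mem_range] at hj
    exact min_eq_left (le_of_lt (hκ₂ j hj))
  have h2 : (∑ j ∈ Finset.Ico κ (d+1), min ((j + m).choose m) s)
      = ∑ j ∈ Finset.Ico κ (d+1), s := by
    refine Finset.sum_congr rfl (fun j hj => ?_)
    rw [Finset.mem_Ico] at hj
    exact min_eq_right (hκ₁.trans (Nat.choose_le_choose m (by omega)))
  rw [h1, h2, hockey m κ, Finset.sum_const, Nat.card_Ico, smul_eq_mul]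
  have : d + 1 - κ = d - κ + 1 := by omega
  rw [this, mul_comm]
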